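/- Let w be a primitive k-th root of unity in a field F. Suppose (x_{u,j})_{j=1}^k and (x_{v,j})_{j=1}^k are elements of F satisfying the 0/1 constraints x^2 = x, orthogonality x_{u,j}x_{u,j'} = 0 for j ≠ j' (likewise for v), sum-to-one constraints ∑_j x_{u,j} = 1 and ∑_j x_{v,j} = 1, and the edge constraints x_{u,j}·x_{v,j} = 0 for all j. Setting Y_u = ∑_j x_{u,j} w^j and Y_v = ∑_j x_{v,j} w^j, it holds that ∑_{j=0}^{k-1} Y_u^j · Y_v^{k-1-j} = 0. -/

import Mathlib

lemma pow_lemma {F : Type} [Field F] {k : ℕ} (w : F) (x : Fin k → F)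
    (hi : ∀ j, x j ^ 2 = x j) (ho : ∀ j j', j ≠ j' → x j * x j' = 0)
    (hs : ∑ j, x j = 1) :
    ∀ n : ℕ, (∑ i : Fin k, x i * w ^ ((i : ℕ) + 1)) ^ n
      = ∑ i : Fin k, x i * (w ^ ((i : ℕ) + 1)) ^ n := by
  intro n
  induction n with
  | zero => simp [hs]
  | succ n ih =>
    rw [pow_succ, ih, Finset.sum_mul_sum]
    apply Finset.sum_congr rfl
    intro i _
    rw [Finset.sum_eq_single i]
    · linear_combination ((w ^ ((i : ℕ) + 1)) ^ n * w ^ ((i : ℕ) + 1)) * hi i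
    · intro j _ hj
      have : x i * (w ^ ((i : ℕ) + 1)) ^ n * (x j * w ^ ((j : ℕ) + 1))
          = x i * x j * ((w ^ ((i : ℕ) + 1)) ^ n * w ^ ((j : ℕ) + 1)) := by ring
      rw [this, ho i j (Ne.symm hj), zero_mul]
    · intro h; exact absurd (Finset.mem_univ i) h

theorem stmt_5 {F : Type} [Field F] (k : ℕ) (hk : 1 ≤ k) (w : F)
    (hw1 : w ^ k = 1) (hwprim : ∀ j : ℕ, 0 < j → j < k → w ^ j ≠ 1)
    (xu xv : Fin k → F)
    (hui : ∀ j, xu j ^ 2 = xu j) (hvi : ∀ j, xv j ^ 2 = xv j)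
    (huo : ∀ j j', j ≠ j' → xu j * xu j' = 0)
    (hvo : ∀ j j', j ≠ j' → xv j * xv j' = 0)
    (hus : ∑ j, xu j = 1) (hvs : ∑ j, xv j = 1)
    (hedge : ∀ j, xu j * xv j = 0) :
    ∑ j ∈ Finset.range k,
      (∑ i : Fin k, xu i * w ^ ((i : ℕ) + 1)) ^ j *
      (∑ i : Fin k, xv i * w ^ ((i : ℕ) + 1)) ^ (k - 1 - j) = 0 := by
  have hw0 : w ≠ 0 := by
    intro h
    rw [h, zero_pow (by omega)] at hw1
    exact zero_ne_one hw1
  -- key fact: w^{i+1} ≠ w^{i'+1} for i ≠ i'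
  have hne : ∀ i i' : Fin k, i ≠ i' → w ^ ((i : ℕ) + 1) ≠ w ^ ((i' : ℕ) + 1) := by
    intro i i' hii
    wlog hlt : (i' : ℕ) < (i : ℕ) generalizing i i'
    · intro h
      have hvne : (i : ℕ) ≠ (i' : ℕ) := Fin.val_ne_of_ne hii
      exact this i' i (Ne.symm hii) (by omega) h.symm
    intro h
    have h1 : w ^ ((i' : ℕ) + 1) * w ^ ((i : ℕ) - (i' : ℕ)) = w ^ ((i' : ℕ) + 1) * 1 := by
      rw [mul_one, ← pow_add,
        show ((i' : ℕ) + 1) + ((i : ℕ) - (i' : ℕ)) = (i : ℕ) + 1 from by omega, h]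
    have h2 : w ^ ((i : ℕ) - (i' : ℕ)) = 1 :=
      mul_left_cancel₀ (pow_ne_zero _ hw0) h1
    exact hwprim ((i : ℕ) - (i' : ℕ)) (by omega) (by have := i.isLt; omega) h2
  have hpow : ∀ (i : Fin k), (w ^ ((i : ℕ) + 1)) ^ k = 1 := by
    intro i
    rw [← pow_mul, mul_comm, pow_mul, hw1, one_pow]
  calc ∑ j ∈ Finset.range k,
      (∑ i : Fin k, xu i * w ^ ((i : ℕ) + 1)) ^ j *
      (∑ i : Fin k, xv i * w ^ ((i : ℕ) + 1)) ^ (k - 1 - j)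
      = ∑ j ∈ Finset.range k, ∑ i : Fin k, ∑ i' : Fin k,
          xu i * xv i' * ((w ^ ((i : ℕ) + 1)) ^ j * (w ^ ((i' : ℕ) + 1)) ^ (k - 1 - j)) := by
        apply Finset.sum_congr rfl
        intro j _
        rw [pow_lemma w xu hui huo hus, pow_lemma w xv hvi hvo hvs, Finset.sum_mul_sum]
        apply Finset.sum_congr rfl; intro i _
        apply Finset.sum_congr rfl; intro i' _
        ring
    _ = ∑ i : Fin k, ∑ i' : Fin k, xu i * xv i' *
          ∑ j ∈ Finset.range k, (w ^ ((i : ℕ) + 1)) ^ j * (w ^ ((i' : ℕ) + 1)) ^ (k - 1 - j) := by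
        rw [Finset.sum_comm]
        apply Finset.sum_congr rfl; intro i _
        rw [Finset.sum_comm]
        apply Finset.sum_congr rfl; intro i' _
        rw [Finset.mul_sum]
    _ = 0 := by
        apply Finset.sum_eq_zero; intro i _
        apply Finset.sum_eq_zero; intro i' _
        by_cases hii : i = i'
        · subst hii; rw [hedge, zero_mul]
        · have hsum : (∑ j ∈ Finset.range k,
              (w ^ ((i : ℕ) + 1)) ^ j * (w ^ ((i' : ℕ) + 1)) ^ (k - 1 - j)) = 0 := by
            have hg := geom_sum₂_mul (w ^ ((i : ℕ) + 1)) (w ^ ((i' : ℕ) + 1)) k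
            rw [hpow i, hpow i', sub_self] at hg
            have hab : w ^ ((i : ℕ) + 1) - w ^ ((i' : ℕ) + 1) ≠ 0 :=
              sub_ne_zero.mpr (hne i i' hii)
            exact (mul_eq_zero.mp hg).resolve_right hab
          rw [hsum, mul_zero]
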